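/- Let h > 0, let U : ℕ → ℝ satisfy U(0) = 0 and ΔU ∈ D⁰(ℕ₁), i.e. the series ∑_{k=1}^∞ (U(k+1) − U(k)) diverges while ∑_{k=1}^∞ |U(k+2) − 2U(k+1) + U(k)| converges. Let G : ℝ → ℝ be continuous, let f : ℕ → ℝ satisfy f(n+1) − f(n) → 0 as n → ∞, let p₀, x₀ ∈ ℝ, and let x : ℕ → ℝ satisfy x_{n+1} = x₀ + h(n+1)p₀ − h·∑_{k=0}^{n} G(x_k)·U(n−k+1) + h·f(n) for all n ≥ 0. Suppose for some integer l ≥ 2 the sequence x has asymptotically period-l points x_{lim,1}, …, x_{lim,l}, indexed cyclically modulo l. Define the first-difference kernel U¹ : ℕ → ℝ by U¹(0) = 0 and U¹(n) = U(n) − U(n−1) for n ≥ 1, and set S¹_{j+1} = ∑_{k=0}^∞ (U¹(lk+j) − U¹(lk+j+1)) for 0 ≤ j < l. Then for every index m (cyclically modulo l), x_{lim,m+1} − 2·x_{lim,m} + x_{lim,m−1} = h·∑_{j=0}^{l−1} S¹_{j+1}·G(x_{lim,m−j}). -/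
import Mathlib


open Filter Finset Topology

theorem regroup_aux (l : ℕ) (hl : 2 ≤ l) (w : ℕ → ℝ) (hw : Summable (fun i => |w i|)) :
    ∑' i, w i = ∑ j ∈ Finset.range l, ∑' k, w (l * k + j) := by
  haveI : NeZero l := ⟨by omega⟩
  have hw' : Summable w := hw.of_abs
  set e2 : Fin l × ℕ ≃ ℕ := ((Nat.divModEquiv l).trans (Equiv.prodComm ℕ (Fin l))).symm with he
  have he2 : ∀ q : Fin l × ℕ, e2 q = q.2 * l + (q.1 : ℕ) := fun q => by
    simp [he, Nat.divModEquiv]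
  have hsum2 : Summable fun q : Fin l × ℕ => w (e2 q) := e2.summable_iff.mpr hw'
  have hfib : ∀ j : Fin l, Summable fun k : ℕ => w (e2 (j, k)) := by
    intro j
    refine (hw.of_abs).comp_injective (i := fun k => e2 (j, k)) fun a b hab => ?_
    simp only [he2] at hab
    have hlp : 0 < l := by omega
    exact Nat.eq_of_mul_eq_mul_right hlp (by omega)
  calc ∑' i, w i = ∑' q : Fin l × ℕ, w (e2 q) := (e2.tsum_eq w).symm
    _ = ∑' (j : Fin l), ∑' k, w (e2 (j, k)) := Summable.tsum_prod' hsum2 hfib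
    _ = ∑ j ∈ Finset.range l, ∑' k, w (l * k + j) := by
        rw [tsum_fintype]
        rw [← Fin.sum_univ_eq_sum_range (fun j => ∑' k, w (l * k + j))]
        refine Finset.sum_congr rfl fun j _ => ?_
        refine tsum_congr fun k => ?_
        rw [he2]
        ring_nf

/-- For a memory map of order `1 < α < 2` type (kernel `U` with
`ΔU ∈ D⁰(ℕ₁)`), the second differences of the asymptotically period-`l`
points are expressed through the coefficients `S¹_{j+1}` built from the first
difference kernel `U¹(n) = U(n) − U(n−1)`. Cyclic indexing is expressed by
periodicity of `xlim`. -/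
theorem stmt_3 (h : ℝ) (hh : 0 < h) (U : ℕ → ℝ) (hU0 : U 0 = 0)
    (hdiv : ¬ Summable (fun k : ℕ => U (k + 1 + 1) - U (k + 1)))
    (hconv : Summable (fun k : ℕ => |U (k + 1 + 2) - 2 * U (k + 1 + 1) + U (k + 1)|))
    (G : ℝ → ℝ) (hG : Continuous G)
    (f : ℕ → ℝ) (hf : Tendsto (fun n : ℕ => f (n + 1) - f n) atTop (𝓝 0))
    (p₀ x₀ : ℝ) (x : ℕ → ℝ)
    (hmap : ∀ n : ℕ, x (n + 1) =
      x₀ + h * (n + 1) * p₀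
        - h * ∑ k ∈ Finset.range (n + 1), G (x k) * U (n - k + 1) + h * f n)
    (l : ℕ) (hl : 2 ≤ l) (xlim : ℕ → ℝ)
    (hper : ∀ m : ℕ, xlim (m + l) = xlim m)
    (hlim : ∀ m : ℕ, 1 ≤ m → m ≤ l →
      Tendsto (fun N : ℕ => x (N * l + m)) atTop (𝓝 (xlim m)))
    (U1 : ℕ → ℝ) (hU1 : ∀ n : ℕ, U1 n = U n - U (n - 1)) :
    ∀ m : ℕ, 1 ≤ m → m ≤ l →
      xlim (m + 1) - 2 * xlim m + xlim (m + l - 1) =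
        h * ∑ j ∈ Finset.range l,
          (∑' k : ℕ, (U1 (l * k + j) - U1 (l * k + j + 1))) * G (xlim (m + l - j)) := by
  have hl0 : 0 < l := by omega
  set d : ℕ → ℝ := fun i => U1 i - U1 (i + 1) with hd
  -- summability of d
  have hd2 : ∀ k : ℕ, d (k + 2) = -(U (k + 1 + 2) - 2 * U (k + 1 + 1) + U (k + 1)) := by
    intro k
    simp only [hd]
    rw [hU1 (k + 2), hU1 (k + 2 + 1)]
    rw [show k + 2 - 1 = k + 1 from by omega, show k + 2 + 1 - 1 = k + 2 from by omega]
    ring_nf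
  have hdabs : Summable (fun i => |d i|) := by
    apply (summable_nat_add_iff 2).mp
    exact hconv.congr fun k => by rw [hd2 k, abs_neg]
  -- extension of hlim to all indices r ≥ 1
  have key : ∀ r : ℕ, 1 ≤ r → Tendsto (fun N : ℕ => x (N * l + r)) atTop (𝓝 (xlim r)) := by
    intro r
    induction r using Nat.strong_induction_on with
    | _ r ih =>
      intro hr
      by_cases hrl : r ≤ l
      · exact hlim r hr hrl
      · have h1 : 1 ≤ r - l := by omega
        have h2 : r - l < r := by omega
        have h3 := (ih (r - l) h2 h1).comp (tendsto_add_atTop_nat 1)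
        have hxl : xlim r = xlim (r - l) := by
          conv_lhs => rw [show r = (r - l) + l from by omega]
          exact hper (r - l)
        rw [hxl]
        refine h3.congr fun N => ?_
        simp only [Function.comp]
        congr 1
        have : (N + 1) * l = N * l + l := by ring
        omega
  have keyG : ∀ r : ℕ, 1 ≤ r → Tendsto (fun N : ℕ => G (x (N * l + r))) atTop (𝓝 (G (xlim r))) :=
    fun r hr => (hG.tendsto _).comp (key r hr)
  -- a global bound on G ∘ x
  have hCf : ∀ j : ℕ, ∃ Cj : ℝ, ∀ N : ℕ, |G (x (N * l + (j + 1)))| ≤ Cj := by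
    intro j
    obtain ⟨Cj, hCj⟩ := (keyG (j + 1) (by omega)).abs.bddAbove_range
    exact ⟨Cj, fun N => hCj ⟨N, rfl⟩⟩
  choose Cf hCfs using hCf
  set C : ℝ := |G (x 0)| + ∑ j ∈ Finset.range l, |Cf j| with hCdef
  have hsumnn : 0 ≤ ∑ j ∈ Finset.range l, |Cf j| :=
    Finset.sum_nonneg fun j _ => abs_nonneg _
  have hCx : ∀ k : ℕ, |G (x k)| ≤ C := by
    intro k
    rcases Nat.eq_zero_or_pos k with rfl | hk
    · simp only [hCdef]; linarith
    · obtain ⟨N, j, hjl, hk'⟩ : ∃ N j, j < l ∧ k = N * l + (j + 1) := by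
        refine ⟨(k - 1) / l, (k - 1) % l, Nat.mod_lt _ hl0, ?_⟩
        have h1 := Nat.div_add_mod (k - 1) l
        have h2 : (k - 1) / l * l = l * ((k - 1) / l) := by ring
        omega
      rw [hk']
      calc |G (x (N * l + (j + 1)))| ≤ Cf j := hCfs j N
        _ ≤ |Cf j| := le_abs_self _
        _ ≤ C := by
            have h3 := Finset.single_le_sum (f := fun j => |Cf j|)
              (fun i _ => abs_nonneg _) (Finset.mem_range.mpr hjl)
            have h4 := abs_nonneg (G (x 0))
            simp only [hCdef]
            linarith
  have hC0 : 0 ≤ C := le_trans (abs_nonneg _) (hCx 0)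
  have hCxlim : ∀ r : ℕ, 1 ≤ r → |G (xlim r)| ≤ C := fun r hr =>
    le_of_tendsto (keyG r hr).abs (Filter.Eventually.of_forall fun N => hCx _)
  -- the second-difference identity
  have ident : ∀ p : ℕ, x (p + 2 + 1) - 2 * x (p + 1 + 1) + x (p + 1)
      = h * (∑ i ∈ Finset.range (p + 2 + 1), G (x (p + 2 - i)) * d i)
        + h * ((f (p + 2) - f (p + 1)) - (f (p + 1) - f p)) := by
    intro p
    rw [hmap (p + 2), hmap (p + 1), hmap p]
    have hsum : (∑ i ∈ Finset.range (p + 2 + 1), G (x (p + 2 - i)) * d i)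
        = 2 * (∑ k ∈ Finset.range (p + 1 + 1), G (x k) * U (p + 1 - k + 1))
          - (∑ k ∈ Finset.range (p + 2 + 1), G (x k) * U (p + 2 - k + 1))
          - (∑ k ∈ Finset.range (p + 1), G (x k) * U (p - k + 1)) := by
      have step1 : (∑ i ∈ Finset.range (p + 2 + 1), G (x (p + 2 - i)) * d i)
          = ∑ j ∈ Finset.range (p + 2 + 1), G (x j) * d (p + 2 - j) := by
        rw [← Finset.sum_range_reflect (fun j => G (x j) * d (p + 2 - j)) (p + 2 + 1)]
        refine Finset.sum_congr rfl fun j hj => ?_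
        have hj' := Finset.mem_range.mp hj
        rw [show p + 2 + 1 - 1 - j = p + 2 - j from by omega]
        rw [show p + 2 - (p + 2 - j) = j from by omega]
      have step2 : (∑ j ∈ Finset.range (p + 2 + 1), G (x j) * d (p + 2 - j))
          = (∑ j ∈ Finset.range (p + 1), G (x j) * d (p + 2 - j))
            + G (x (p + 1)) * d 1 + G (x (p + 2)) * d 0 := by
        rw [Finset.sum_range_succ (fun j => G (x j) * d (p + 2 - j)) (p + 2)]
        rw [show Finset.range (p + 2) = Finset.range (p + 1 + 1) from rfl]
        rw [Finset.sum_range_succ (fun j => G (x j) * d (p + 2 - j)) (p + 1)]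
        rw [show p + 2 - (p + 1) = 1 from by omega, show p + 2 - (p + 2) = 0 from by omega]
      have step3 : ∀ j ∈ Finset.range (p + 1),
          G (x j) * d (p + 2 - j)
            = 2 * (G (x j) * U (p + 1 - j + 1)) - G (x j) * U (p + 2 - j + 1)
              - G (x j) * U (p - j + 1) := by
        intro j hj
        have hj' := Finset.mem_range.mp hj
        simp only [hd]
        rw [hU1 (p + 2 - j), hU1 (p + 2 - j + 1)]
        rw [show p + 2 - j - 1 = p + 1 - j from by omega,
            show p + 2 - j + 1 - 1 = p + 2 - j from by omega,
            show p + 1 - j + 1 = p + 2 - j from by omega,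
            show p - j + 1 = p + 1 - j from by omega]
        ring
      rw [step1, step2, Finset.sum_congr rfl step3]
      have hd1 : d 1 = U 1 - U 0 - (U 2 - U 1) := by
        simp only [hd]; rw [hU1 1, hU1 (1 + 1)]; try norm_num
      have hd0 : d 0 = 0 - (U 1 - U 0) := by
        simp only [hd]; rw [hU1 0, hU1 (0 + 1)]; try norm_num
      rw [hd1, hd0, hU0]
      rw [Finset.sum_sub_distrib, Finset.sum_sub_distrib, ← Finset.mul_sum]
      rw [Finset.sum_range_succ (fun k => G (x k) * U (p + 1 - k + 1)) (p + 1)]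
      rw [Finset.sum_range_succ (fun k => G (x k) * U (p + 2 - k + 1)) (p + 2)]
      rw [show Finset.range (p + 2) = Finset.range (p + 1 + 1) from rfl]
      rw [Finset.sum_range_succ (fun k => G (x k) * U (p + 2 - k + 1)) (p + 1)]
      rw [show p + 1 - (p + 1) = 0 from by omega, show p + 2 - (p + 1) = 1 from by omega,
          show p + 2 - (p + 2) = 0 from by omega]
      norm_num
      ring
    rw [hsum]
    push_cast
    ring
  -- now fix m
  intro m hm1 hml
  set γ : ℕ → ℝ := fun i => G (xlim (m + l - i % l)) with hγ
  have hmod : ∀ i : ℕ, 1 ≤ m + l - i % l := by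
    intro i
    have := Nat.mod_lt i hl0
    omega
  have hγC : ∀ i, |γ i| ≤ C := fun i => hCxlim _ (hmod i)
  -- dominated convergence setup
  set F : ℕ → ℕ → ℝ := fun N i =>
    (if i ≤ N * l + (m + l - 2) + 2 then G (x (N * l + (m + l - 2) + 2 - i)) else 0) * d i
    with hF
  have hFb : ∀ N i, |F N i| ≤ C * |d i| := by
    intro N i
    simp only [hF]
    rw [abs_mul]
    by_cases hc : i ≤ N * l + (m + l - 2) + 2
    · rw [if_pos hc]
      exact mul_le_mul_of_nonneg_right (hCx _) (abs_nonneg _)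
    · rw [if_neg hc]
      simp only [abs_zero, zero_mul]
      exact mul_nonneg hC0 (abs_nonneg _)
  have hFlim : ∀ i : ℕ, Tendsto (fun N => F N i) atTop (𝓝 (γ i * d i)) := by
    intro i
    obtain ⟨q, j, hjl, hi⟩ : ∃ q j, j < l ∧ i = q * l + j := by
      refine ⟨i / l, i % l, Nat.mod_lt _ hl0, ?_⟩
      have h1 := Nat.div_add_mod i l
      have h2 : i / l * l = l * (i / l) := by ring
      omega
    have hmodi : i % l = j := by
      rw [hi, Nat.add_comm, Nat.add_mul_mod_self_right, Nat.mod_eq_of_lt hjl]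
    have hγi : γ i = G (xlim (m + l - j)) := by
      simp only [hγ, hmodi]
    have hr1 : 1 ≤ m + l - j := by omega
    have hGc : Tendsto (fun N => G (x ((N - q) * l + (m + l - j)))) atTop
        (𝓝 (G (xlim (m + l - j)))) :=
      (hG.tendsto _).comp ((key _ hr1).comp (tendsto_sub_atTop_nat q))
    have heq : (fun N => G (x ((N - q) * l + (m + l - j))) * d i) =ᶠ[atTop] fun N => F N i := by
      filter_upwards [eventually_ge_atTop (q + 1)] with N hN
      obtain ⟨a, rfl⟩ : ∃ a, N = q + 1 + a := ⟨N - (q + 1), by omega⟩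
      have e1 : (q + 1 + a) * l = q * l + a * l + l := by ring
      have e2 : (q + 1 + a - q) * l = a * l + l := by
        rw [show q + 1 + a - q = a + 1 from by omega]; ring
      have hle : i ≤ (q + 1 + a) * l + (m + l - 2) + 2 := by omega
      have hidx : (q + 1 + a) * l + (m + l - 2) + 2 - i = (q + 1 + a - q) * l + (m + l - j) := by
        omega
      simp only [hF]
      rw [if_pos hle, hidx]
    rw [hγi]
    exact (hGc.mul_const (d i)).congr' heq
  have hDCT : Tendsto (fun N => ∑' i, F N i) atTop (𝓝 (∑' i, γ i * d i)) := by
    refine tendsto_tsum_of_dominated_convergence (hdabs.mul_left C) hFlim ?_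
    exact Filter.Eventually.of_forall fun N i => by rw [Real.norm_eq_abs]; exact hFb N i
  have hFeq : ∀ N : ℕ, (∑' i, F N i)
      = ∑ i ∈ Finset.range (N * l + (m + l - 2) + 2 + 1),
          G (x (N * l + (m + l - 2) + 2 - i)) * d i := by
    intro N
    rw [tsum_eq_sum (s := Finset.range (N * l + (m + l - 2) + 2 + 1)) ?_]
    · refine Finset.sum_congr rfl fun i hi => ?_
      have hi' := Finset.mem_range.mp hi
      simp only [hF]
      rw [if_pos (by omega)]
    · intro i hi
      simp only [Finset.mem_range, not_lt] at hi
      simp only [hF]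
      rw [if_neg (by omega), zero_mul]
  have hsumlim : Tendsto (fun N => ∑ i ∈ Finset.range (N * l + (m + l - 2) + 2 + 1),
      G (x (N * l + (m + l - 2) + 2 - i)) * d i) atTop (𝓝 (∑' i, γ i * d i)) :=
    hDCT.congr hFeq
  -- the Δ²f term tends to 0
  have hPtop : Tendsto (fun N : ℕ => N * l + (m + l - 2)) atTop atTop := by
    refine tendsto_atTop_mono (fun N => ?_) tendsto_id
    have : N * 1 ≤ N * l := Nat.mul_le_mul_left N (by omega)
    simp only [id_eq]
    omega
  have hΔ1 : Tendsto (fun N => f (N * l + (m + l - 2) + 1 + 1) - f (N * l + (m + l - 2) + 1))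
      atTop (𝓝 0) := hf.comp ((tendsto_add_atTop_nat 1).comp hPtop)
  have hΔ2 : Tendsto (fun N => f (N * l + (m + l - 2) + 1) - f (N * l + (m + l - 2)))
      atTop (𝓝 0) := hf.comp hPtop
  have hΔ : Tendsto (fun N => (f (N * l + (m + l - 2) + 2) - f (N * l + (m + l - 2) + 1))
      - (f (N * l + (m + l - 2) + 1) - f (N * l + (m + l - 2)))) atTop (𝓝 0) := by
    have := hΔ1.sub hΔ2
    simpa using this
  -- combine: the common sequence has two limits
  have hR : Tendsto (fun N => x (N * l + (m + l - 2) + 2 + 1)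
      - 2 * x (N * l + (m + l - 2) + 1 + 1) + x (N * l + (m + l - 2) + 1)) atTop
      (𝓝 (h * (∑' i, γ i * d i) + h * 0)) :=
    ((hsumlim.const_mul h).add (hΔ.const_mul h)).congr fun N => (ident _).symm
  have hL : Tendsto (fun N => x (N * l + (m + l - 2) + 2 + 1)
      - 2 * x (N * l + (m + l - 2) + 1 + 1) + x (N * l + (m + l - 2) + 1)) atTop
      (𝓝 (xlim (m + 1) - 2 * xlim m + xlim (m + l - 1))) := by
    have k3 := key (m + l + 1) (by omega)
    have k2 := key (m + l) (by omega)
    have k1 := key (m + l - 1) (by omega)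
    rw [show xlim (m + l + 1) = xlim (m + 1) from by
      rw [show m + l + 1 = m + 1 + l from by omega]; exact hper (m + 1)] at k3
    rw [hper m] at k2
    refine ((k3.sub (k2.const_mul 2)).add k1).congr fun N => ?_
    rw [show N * l + (m + l + 1) = N * l + (m + l - 2) + 2 + 1 from by omega,
        show N * l + (m + l) = N * l + (m + l - 2) + 1 + 1 from by omega,
        show N * l + (m + l - 1) = N * l + (m + l - 2) + 1 from by omega]
  have huniq := tendsto_nhds_unique hL hR
  rw [huniq, mul_zero, add_zero]
  congr 1
  have hγd : Summable (fun i => |γ i * d i|) := by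
    refine Summable.of_nonneg_of_le (fun i => abs_nonneg _) (fun i => ?_) (hdabs.mul_left C)
    rw [abs_mul]
    exact mul_le_mul_of_nonneg_right (hγC i) (abs_nonneg _)
  rw [regroup_aux l hl _ hγd]
  refine Finset.sum_congr rfl fun j hj => ?_
  have hjl := Finset.mem_range.mp hj
  have hm2 : ∀ k : ℕ, γ (l * k + j) = G (xlim (m + l - j)) := by
    intro k
    simp only [hγ]
    rw [Nat.mul_add_mod, Nat.mod_eq_of_lt hjl]
  calc (∑' k, γ (l * k + j) * d (l * k + j))
      = ∑' k, G (xlim (m + l - j)) * d (l * k + j) := tsum_congr fun k => by rw [hm2]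
    _ = G (xlim (m + l - j)) * ∑' k, d (l * k + j) := tsum_mul_left
    _ = (∑' k : ℕ, (U1 (l * k + j) - U1 (l * k + j + 1))) * G (xlim (m + l - j)) := by
        rw [mul_comm]
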